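/- arXiv:2011.04110 — 2 statements merged into one kernel-verified Lean document; each statement's English description precedes it below -/
import Mathlib

section
/- (Theorem 3.2, first part) Let L be a non-metabelian graded Lie algebra of maximal class over a field F, with setup elements x, y and first constituent length ℓ. Then the characteristic of F is a positive prime p, and ℓ = 2q for some power q = p^m of p. -/
/-- Left-normed bracket of `a` with `n` copies of `b`:
`lnb a b n = [a b … b]` with `n` occurrences of `b`. -/
def lnb {L : Type*} [LieRing L] (a b : L) : ℕ → L
  | 0 => a
  | n + 1 => ⁅lnb a b n, b⁆

/-- `Lc` is a grading of `L` (indexed by `ℕ`, with trivial component in degree `0`)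
making `L` an (infinite-dimensional) graded Lie algebra of maximal class:
`L` is the internal direct sum of the `Lc i`, `⁅Lc i, Lc j⁆ ⊆ Lc (i+j)`,
`dim (Lc 1) = 2`, `dim (Lc i) = 1` for `i ≥ 2`, and
`Lc (i+1) = span {⁅u, w⁆ : u ∈ Lc i, w ∈ Lc 1}` for `i ≥ 1`. -/
structure IsMaxClassGrading (F : Type*) [Field F] (L : Type*) [LieRing L] [LieAlgebra F L]
    (Lc : ℕ → Submodule F L) : Prop where
  zero : Lc 0 = ⊥
  internal : DirectSum.IsInternal Lc
  bracket_mem : ∀ i j : ℕ, ∀ u ∈ Lc i, ∀ w ∈ Lc j, ⁅u, w⁆ ∈ Lc (i + j)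
  dim_one : Module.finrank F (Lc 1) = 2
  dim_rest : ∀ i : ℕ, 2 ≤ i → Module.finrank F (Lc i) = 1
  gen : ∀ i : ℕ, 1 ≤ i →
    Lc (i + 1) = Submodule.span F {z | ∃ u ∈ Lc i, ∃ w ∈ Lc 1, z = ⁅u, w⁆}

/-- The standard setup for a non-metabelian graded Lie algebra of maximal class:
`y ∈ L_1` is nonzero and centralizes `L_2`, `x ∈ L_1` is not a scalar multiple of `y`,
the first constituent length `ℓ` is positive with `[y x^i y] = 0` for `0 ≤ i < ℓ−1` and
`[y x^{ℓ−1} y] ≠ 0`, and `x` is normalized so that `[y x^ℓ] = 0`. -/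
structure MaxClassSetup {F : Type*} [Field F] {L : Type*} [LieRing L] [LieAlgebra F L]
    (Lc : ℕ → Submodule F L) (x y : L) (ℓ : ℕ) : Prop where
  y_mem : y ∈ Lc 1
  y_ne : y ≠ 0
  y_central : ∀ u ∈ Lc 2, ⁅u, y⁆ = 0
  x_mem : x ∈ Lc 1
  x_not_mul : ∀ c : F, x ≠ c • y
  ell_pos : 0 < ℓ
  first_const : ∀ i : ℕ, i < ℓ - 1 → ⁅lnb y x i, y⁆ = 0
  first_const_ne : ⁅lnb y x (ℓ - 1), y⁆ ≠ 0
  normalized : lnb y x ℓ = 0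

/-- The sequences `(ℓ_r)_{r≥1}` of constituent lengths and `(v_r)_{r≥1}` of
distinguished homogeneous elements: `ℓ_1 = ℓ`, `v_1 = [y x^{ℓ−1}]`, and for `r ≥ 2`,
`ℓ_r > 0`, `[v_{r−1} y x^i y] = 0` for `0 ≤ i < ℓ_r − 1`,
`v_r = [v_{r−1} y x^{ℓ_r − 1}]`, and `[v_r y] ≠ 0`. -/
structure ConstituentSeq {F : Type*} [Field F] {L : Type*} [LieRing L] [LieAlgebra F L]
    (x y : L) (ℓ : ℕ) (l : ℕ → ℕ) (v : ℕ → L) : Prop where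
  l_one : l 1 = ℓ
  v_one : v 1 = lnb y x (ℓ - 1)
  l_pos : ∀ r : ℕ, 2 ≤ r → 0 < l r
  const : ∀ r : ℕ, 2 ≤ r → ∀ i : ℕ, i < l r - 1 → ⁅lnb ⁅v (r - 1), y⁆ x i, y⁆ = 0
  v_def : ∀ r : ℕ, 2 ≤ r → v r = lnb ⁅v (r - 1), y⁆ x (l r - 1)
  const_end : ∀ r : ℕ, 2 ≤ r → ⁅v r, y⁆ ≠ 0


section NTaux

variable {p : ℕ} [Fact p.Prime]

lemma lucas1 (n k : ℕ) :
    ((n.choose k : ℕ) : ZMod p) =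
      (((n % p).choose (k % p) : ℕ) : ZMod p) * (((n / p).choose (k / p) : ℕ) : ZMod p) := by
  have h := Choose.choose_modEq_choose_mod_mul_choose_div (p := p) (n := n) (k := k)
  have h2 := (ZMod.intCast_eq_intCast_iff _ _ _).mpr h
  push_cast at h2 ⊢
  exact h2

lemma digit_force : ∀ (i A : ℕ), (((A + p ^ i).choose (p ^ i) : ℕ) : ZMod p) = 0 →
    A / p ^ i % p = p - 1 := by
  have hp := (Fact.out : p.Prime)
  intro i
  induction i with
  | zero =>
    intro A h
    simp only [pow_zero, Nat.choose_one_right, Nat.div_one] at h ⊢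
    have hdvd : p ∣ A + 1 := (ZMod.natCast_eq_zero_iff _ _).mp h
    obtain ⟨q, hq⟩ := hdvd
    rcases q with _ | q'
    · omega
    · have hq2 : A + 1 = p * q' + p := by rw [hq]; ring
      have hA : A = p * q' + (p - 1) := by have := hp.two_le; omega
      rw [hA, Nat.mul_add_mod]
      exact Nat.mod_eq_of_lt (by have := hp.two_le; omega)
  | succ i ih =>
    intro A h
    have hpow : p ^ (i + 1) = p ^ i * p := pow_succ p i
    have h1 : p ^ (i+1) % p = 0 := by rw [hpow]; exact Nat.mul_mod_left _ _
    have h2 : p ^ (i+1) / p = p ^ i := by rw [hpow]; exact Nat.mul_div_cancel _ hp.pos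
    have h3 : (A + p ^ (i+1)) / p = A / p + p ^ i := by
      rw [hpow]; exact Nat.add_mul_div_right A (p ^ i) hp.pos
    rw [lucas1, h1, h2, h3, Nat.choose_zero_right] at h
    simp only [Nat.cast_one, one_mul] at h
    have := ih (A / p) h
    have h4 : p * p ^ i = p ^ (i + 1) := (_root_.pow_succ' p i).symm
    rw [Nat.div_div_eq_div_mul] at this
    rwa [h4] at this

lemma choose_digit {g : ℕ} (hg : g < p) : ∀ (i N : ℕ),
    ((N.choose (g * p ^ i) : ℕ) : ZMod p) = (((N / p ^ i % p).choose g : ℕ) : ZMod p) := by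
  have hp := (Fact.out : p.Prime)
  intro i
  induction i with
  | zero =>
    intro N
    rw [pow_zero, mul_one, lucas1, Nat.mod_eq_of_lt hg, Nat.div_eq_of_lt hg,
      Nat.choose_zero_right, Nat.div_one]
    simp
  | succ i ih =>
    intro N
    have hpow : g * p ^ (i + 1) = (g * p ^ i) * p := by ring
    have h1 : g * p ^ (i+1) % p = 0 := by rw [hpow]; exact Nat.mul_mod_left _ _
    have h2 : g * p ^ (i+1) / p = g * p ^ i := by rw [hpow]; exact Nat.mul_div_cancel _ hp.pos
    rw [lucas1, h1, h2, Nat.choose_zero_right]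
    simp only [Nat.cast_one, one_mul]
    rw [ih (N / p), Nat.div_div_eq_div_mul]
    have h4 : p * p ^ i = p ^ (i + 1) := (_root_.pow_succ' p i).symm
    rw [h4]

lemma mod_pow_succ' (N e : ℕ) : N % p ^ (e + 1) = N % p ^ e + p ^ e * (N / p ^ e % p) := by
  have hp := (Fact.out : p.Prime)
  have hpe : 0 < p ^ e := pow_pos hp.pos e
  conv_lhs => rw [← Nat.div_add_mod N (p ^ e)]
  rw [pow_succ]
  rw [Nat.add_mod, Nat.mul_mod_mul_left]
  have hr : N % p ^ e % (p ^ e * p) = N % p ^ e :=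
    Nat.mod_eq_of_lt (lt_of_lt_of_le (Nat.mod_lt _ hpe) (Nat.le_mul_of_pos_right _ hp.pos))
  rw [hr]
  have hlt : p ^ e * (N / p ^ e % p) + N % p ^ e < p ^ e * p := by
    have h1 : N / p ^ e % p < p := Nat.mod_lt _ hp.pos
    have h2 : N % p ^ e < p ^ e := Nat.mod_lt _ hpe
    calc p ^ e * (N / p ^ e % p) + N % p ^ e < p ^ e * (N / p ^ e % p) + p ^ e := by omega
    _ = p ^ e * (N / p ^ e % p + 1) := by ring
    _ ≤ p ^ e * p := Nat.mul_le_mul_left _ (by omega)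
  rw [Nat.mod_eq_of_lt hlt]
  omega

lemma all_digits : ∀ (e N : ℕ), (∀ i, i < e → N / p ^ i % p = p - 1) → N % p ^ e = p ^ e - 1 := by
  have hp := (Fact.out : p.Prime)
  intro e
  induction e with
  | zero => intro N _; simp [Nat.mod_one]
  | succ e ih =>
    intro N h
    rw [mod_pow_succ', ih N (fun i hi => h i (by omega)), h e (by omega)]
    have hpe : 0 < p ^ e := pow_pos hp.pos e
    have h1 : p ^ e * p = p ^ e * (p - 1) + p ^ e := by
      have h2 : p - 1 + 1 = p := Nat.succ_pred_eq_of_pos hp.pos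
      calc p ^ e * p = p ^ e * ((p - 1) + 1) := by rw [h2]
      _ = p ^ e * (p - 1) + p ^ e := by ring
    rw [pow_succ]
    omega

end NTaux

lemma NTmain (p : ℕ) (hp : p.Prime) (ℓ n : ℕ) (hl4 : 4 ≤ ℓ) (hle : 2 ∣ ℓ)
    (hn2 : 2 ≤ n) (hnl : n ≤ ℓ - 1)
    (hc : ∀ j, 1 ≤ j → j < n → (((ℓ - 1).choose j : ℕ) : ZMod p) = (-1) ^ j)
    (hd : ∀ k, 1 ≤ k → k ≤ ℓ - 1 → k ≠ ℓ - n → (((n - 1 + k).choose k : ℕ) : ZMod p) = 0) :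
    ∃ m, ℓ = 2 * p ^ m := by
  haveI : Fact p.Prime := ⟨hp⟩
  have hp2 : 2 ≤ p := hp.two_le
  set A := n - 1 with hA
  -- sigma
  have hex : ∃ i, ℓ - 1 < p ^ i := ⟨ℓ, Nat.lt_pow_self (n := ℓ) hp.one_lt |>.trans_le' (by omega)⟩
  set σ := Nat.find hex with hσdef
  have hσ : ℓ - 1 < p ^ σ := Nat.find_spec hex
  have hσ' : ∀ i, i < σ → p ^ i ≤ ℓ - 1 := fun i hi => not_lt.mp (Nat.find_min hex hi)
  have hσ0 : 0 < σ := by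
    rcases Nat.eq_zero_or_pos σ with h | h
    · rw [h] at hσ; simp at hσ; omega
    · exact h
  have hpinj : ∀ i j : ℕ, p ^ i = p ^ j → i = j := fun i j h =>
    Nat.pow_right_injective hp2 h
  -- step A
  have stepA : ∀ i, i < σ → p ^ i ≠ ℓ - n → A / p ^ i % p = p - 1 := by
    intro i hi hne
    refine digit_force i A ?_
    exact hd (p ^ i) (Nat.one_le_pow _ _ hp.pos) (hσ' i hi) hne
  have hAle : A < p ^ σ := by omega
  -- exists c
  have hcpow : ∃ c, c < σ ∧ p ^ c = ℓ - n := by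
    by_contra hno
    push_neg at hno
    have hall : ∀ i, i < σ → A / p ^ i % p = p - 1 := fun i hi => stepA i hi (hno i hi)
    have hA2 := all_digits σ A hall
    rw [Nat.mod_eq_of_lt hAle] at hA2
    have : 0 < p ^ σ := pow_pos hp.pos σ
    omega
  obtain ⟨c, hcσ, hcval⟩ := hcpow
  set d := A / p ^ c % p with hddef
  have hdlt : d < p := Nat.mod_lt _ hp.pos
  have hdne : d ≠ p - 1 := by
    intro hdp
    have hall : ∀ i, i < σ → A / p ^ i % p = p - 1 := by
      intro i hi
      by_cases hic : i = c
      · rw [hic, ← hddef, hdp]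
      · exact stepA i hi (fun h => hic (hpinj i c (h.trans hcval.symm)))
    have hA2 := all_digits σ A hall
    rw [Nat.mod_eq_of_lt hAle] at hA2
    have : 0 < p ^ σ := pow_pos hp.pos σ
    omega
  have hdp2 : d ≤ p - 2 := by omega
  -- low digits
  have hlow : A % p ^ c = p ^ c - 1 := by
    refine all_digits c A ?_
    intro i hi
    exact stepA i (hi.trans hcσ) (fun h => (by omega : i ≠ c) (hpinj i c (h.trans hcval.symm)))
  -- B digits
  set e := σ - (c + 1) with hedef
  set B := A / p ^ (c + 1) with hBdef
  have hBd : ∀ i, i < e → B / p ^ i % p = p - 1 := by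
    intro i hi
    have h1 : B / p ^ i = A / p ^ (c + 1 + i) := by
      rw [hBdef, Nat.div_div_eq_div_mul, ← pow_add]
    rw [h1]
    exact stepA (c + 1 + i) (by omega) (fun h => (by omega : c + 1 + i ≠ c) (hpinj _ c (h.trans hcval.symm)))
  have hBlt : B < p ^ e := by
    rw [hBdef]
    rw [Nat.div_lt_iff_lt_mul (pow_pos hp.pos _)]
    calc A < p ^ σ := hAle
    _ = p ^ e * p ^ (c + 1) := by rw [← pow_add]; congr 1; omega
  have hBval : B = p ^ e - 1 := by
    have := all_digits e B hBd
    rwa [Nat.mod_eq_of_lt hBlt] at this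
  -- reconstruct A
  have hArec : A = p ^ (c + 1) * (p ^ e - 1) + (p ^ c - 1) + p ^ c * d := by
    have h1 : p ^ (c + 1) * B + A % p ^ (c + 1) = A := Nat.div_add_mod A (p ^ (c + 1))
    have h2 : A % p ^ (c + 1) = A % p ^ c + p ^ c * d := mod_pow_succ' A c
    rw [hBval] at h1
    omega
  have hpc : 0 < p ^ c := pow_pos hp.pos c
  have hpe1 : 0 < p ^ e := pow_pos hp.pos e
  have hnval : n = p ^ (c + 1) * (p ^ e - 1) + p ^ c * (d + 1) := by
    have : n = A + 1 := by omega
    rw [this, hArec]; have : p ^ c * (d + 1) = p ^ c * d + p ^ c := by ring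
    omega
  have hlval : ℓ = p ^ (c + 1) * (p ^ e - 1) + p ^ c * (d + 2) := by
    have h1 : ℓ = n + p ^ c := by omega
    rw [h1, hnval]
    have : p ^ c * (d + 2) = p ^ c * (d + 1) + p ^ c := by ring
    omega
  have hσce : σ = c + 1 + e := by omega
  -- ℓ - 1 digit at c is d + 1
  have hdigit : (ℓ - 1) / p ^ c % p = d + 1 := by
    have h1 : ℓ - 1 = A + p ^ c := by omega
    have h2 : (A + p ^ c) / p ^ c = A / p ^ c + 1 := by
      rw [Nat.add_div_right _ hpc]
    rw [h1, h2, Nat.add_mod]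
    have h3 : (1 : ℕ) % p = 1 := Nat.mod_eq_of_lt (by omega)
    rw [h3, ← hddef]
    exact Nat.mod_eq_of_lt (by omega)
  by_cases hp2' : p = 2
  · -- p = 2 : then d = 0 and ℓ = 2 ^ σ
    subst hp2'
    have hd0 : d = 0 := by omega
    refine ⟨σ - 1, ?_⟩
    have h1 : ℓ = 2 ^ (c + 1) * (2 ^ e - 1) + 2 ^ c * 2 := by rw [hlval, hd0]
    have h2 : 2 ^ c * 2 = 2 ^ (c + 1) := (pow_succ 2 c).symm
    have h3 : 2 ^ (c + 1) * ((2 ^ e - 1) + 1) = 2 ^ (c + 1) * 2 ^ e := by congr 1; omega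
    have h3' : 2 ^ (c + 1) * ((2 ^ e - 1) + 1) = 2 ^ (c + 1) * (2 ^ e - 1) + 2 ^ (c + 1) := by ring
    have h4 : 2 ^ (c + 1) * 2 ^ e = 2 ^ σ := by rw [← pow_add]; congr 1; omega
    have h5 : (2 : ℕ) ^ σ = 2 * 2 ^ (σ - 1) := by
      have h6 : σ - 1 + 1 = σ := by omega
      calc (2:ℕ) ^ σ = 2 ^ (σ - 1 + 1) := by rw [h6]
      _ = 2 ^ (σ - 1) * 2 := pow_succ 2 (σ - 1)
      _ = 2 * 2 ^ (σ - 1) := by ring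
    omega
  · -- p odd
    have hpodd : Odd p := hp.odd_of_ne_two hp2'
    have hnotpow : ∀ k : ℕ, ℓ ≠ p ^ k := by
      intro k hcon
      have h2 : (2 : ℕ) ∣ p ^ k := hcon ▸ hle
      have h3 := Nat.Prime.dvd_of_dvd_pow Nat.prime_two h2
      have h4 := (Nat.prime_dvd_prime_iff_eq Nat.prime_two hp).mp h3
      omega
    rcases Nat.eq_zero_or_pos e with he0 | he1
    · -- e = 0 : n = p^c*(d+1), ℓ = p^c*(d+2)
      have hn' : n = p ^ c * (d + 1) := by rw [hnval, he0]; simp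
      have hl' : ℓ = p ^ c * (d + 2) := by rw [hlval, he0]; simp
      rcases Nat.eq_zero_or_pos d with hd0 | hd1
      · refine ⟨c, ?_⟩
        rw [hl', hd0]
        ring
      · exfalso
        have hj : p ^ c < n := by
          rw [hn']
          calc p ^ c = p ^ c * 1 := by ring
          _ < p ^ c * (d + 1) := by
            apply (Nat.mul_lt_mul_left hpc).mpr
            omega
        have hcj := hc (p ^ c) (Nat.one_le_pow _ _ hp.pos) hj
        have hlucas := choose_digit (show (1:ℕ) < p by omega) c (ℓ - 1)
        rw [one_mul] at hlucas
        rw [hlucas, hdigit, Nat.choose_one_right] at hcj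
        have hoddpc : Odd (p ^ c) := hpodd.pow
        rw [hoddpc.neg_one_pow] at hcj
        have hz : ((d + 2 : ℕ) : ZMod p) = 0 := by
          push_cast at hcj ⊢
          linear_combination hcj
        have hdvd : p ∣ d + 2 := (ZMod.natCast_eq_zero_iff _ _).mp hz
        have hle2 : p ≤ d + 2 := Nat.le_of_dvd (by omega) hdvd
        have hd2p : d + 2 = p := by omega
        have hl'' : ℓ = p ^ (c + 1) := by rw [hl', hd2p]; exact (pow_succ p c).symm
        exact hnotpow (c + 1) hl''
    · by_cases hd2p : d + 2 = p
      · exfalso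
        have h2 : p ^ c * p = p ^ (c + 1) := (pow_succ p c).symm
        have h3 : p ^ (c + 1) * ((p ^ e - 1) + 1) = p ^ (c + 1) * p ^ e := by congr 1; omega
        have h3' : p ^ (c + 1) * ((p ^ e - 1) + 1) = p ^ (c + 1) * (p ^ e - 1) + p ^ (c + 1) := by
          ring
        have h4 : p ^ (c + 1) * p ^ e = p ^ σ := by rw [← pow_add]; congr 1; omega
        have hl'' : ℓ = p ^ σ := by rw [hlval, hd2p]; omega
        exact hnotpow σ hl''
      · exfalso
        have hdp3 : d + 2 < p := by omega
        have hpe2 : 1 < p ^ e := Nat.one_lt_pow (by omega) (by omega)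
        have hjn : (d + 2) * p ^ c < n := by
          rw [hnval]
          have h1 : (d + 2) * p ^ c ≤ p * p ^ c := Nat.mul_le_mul_right _ (by omega)
          have h2 : p * p ^ c = p ^ (c + 1) := (_root_.pow_succ' p c).symm
          have h3 : p ^ (c + 1) * 1 ≤ p ^ (c + 1) * (p ^ e - 1) :=
            Nat.mul_le_mul_left _ (by omega)
          have h4 : 0 < p ^ c * (d + 1) := by positivity
          omega
        have hcj := hc ((d + 2) * p ^ c) (Nat.one_le_iff_ne_zero.mpr (by positivity)) hjn
        have hlucas := choose_digit hdp3 c (ℓ - 1)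
        rw [hlucas, hdigit, Nat.choose_eq_zero_of_lt (by omega)] at hcj
        have hu : IsUnit ((-1 : ZMod p) ^ ((d + 2) * p ^ c)) := isUnit_one.neg.pow _
        rw [Nat.cast_zero] at hcj
        exact hu.ne_zero hcj.symm





/-- Theorem 3.2, first part: the first constituent length of a non-metabelian graded
Lie algebra of maximal class equals `2q`, where `q` is a power of the (necessarily
positive prime) characteristic `p` of the ground field. -/
theorem first_constituent_length {F : Type*} [Field F] {L : Type*} [LieRing L] [LieAlgebra F L]
    (Lc : ℕ → Submodule F L) (hL : IsMaxClassGrading F L Lc)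
    (x y : L) (ℓ : ℕ) (hsetup : MaxClassSetup Lc x y ℓ) :
    ∃ p : ℕ, p.Prime ∧ CharP F p ∧ ∃ m : ℕ, ℓ = 2 * p ^ m := by
  classical
  obtain ⟨hym, hyne, hyc, hxm, hxnm, hlpos, hfc, hfcn, hnorm⟩ := hsetup
  have hSsucc : ∀ n : ℕ, lnb y x (n + 1) = ⁅lnb y x n, x⁆ := fun n => rfl
  have hS00 : lnb y x 0 = y := rfl
  have hSmem : ∀ n : ℕ, lnb y x n ∈ Lc (n + 1) := by
    intro n
    induction n with
    | zero => exact hym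
    | succ n ih => exact hL.bracket_mem (n + 1) 1 _ ih _ hxm
  have hS0 : ∀ m : ℕ, ℓ ≤ m → lnb y x m = 0 := by
    have h : ∀ j : ℕ, lnb y x (ℓ + j) = 0 := by
      intro j
      induction j with
      | zero => exact hnorm
      | succ j ih => rw [show ℓ + (j + 1) = (ℓ + j) + 1 by omega, hSsucc, ih, zero_lie]
    intro m hm
    rw [show m = ℓ + (m - ℓ) by omega]
    exact h _
  have hl3 : 3 ≤ ℓ := by
    by_contra hcon
    have h12 : ℓ = 1 ∨ ℓ = 2 := by omega
    rcases h12 with h | h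
    · apply hfcn
      rw [h]
      show ⁅lnb y x 0, y⁆ = 0
      rw [hS00]
      exact lie_self y
    · apply hfcn
      rw [h]
      show ⁅lnb y x 1, y⁆ = 0
      exact hyc _ (by simpa using hSmem 1)
  have hc0 : ∀ m : ℕ, m ≠ ℓ - 1 → ⁅lnb y x m, y⁆ = 0 := by
    intro m hm
    rcases lt_or_ge m (ℓ - 1) with h | h
    · exact hfc m h
    · rw [hS0 m (by omega), zero_lie]
  set t : L := ⁅lnb y x (ℓ - 1), y⁆ with htdef
  have ht : t ≠ 0 := hfcn
  have hTsucc : ∀ k : ℕ, lnb t x (k + 1) = ⁅lnb t x k, x⁆ := fun k => rfl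
  have hT00 : lnb t x 0 = t := rfl
  -- the key closed formula for brackets [S a, S b]
  have key : ∀ b : ℕ,
      (∀ a, a + b + 1 < ℓ → ⁅lnb y x a, lnb y x b⁆ = 0) ∧
      (∀ a m, a ≤ ℓ - 1 → a + b = (ℓ - 1) + m →
        ⁅lnb y x a, lnb y x b⁆
          = (((-1 : ℤ) ^ (ℓ - 1 - a)) * (b.choose (ℓ - 1 - a) : ℤ)) • lnb t x m) := by
    intro b
    induction b with
    | zero =>
      constructor
      · intro a ha
        rw [hS00]
        exact hc0 a (by omega)
      · intro a m ha hm
        have hm0 : m = 0 := by omega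
        have haℓ : a = ℓ - 1 := by omega
        subst hm0
        subst haℓ
        rw [hS00, Nat.sub_self, pow_zero, Nat.choose_zero_right, hT00, ← htdef]
        norm_num
    | succ b ih =>
      obtain ⟨ih0, ihf⟩ := ih
      have expand : ∀ a, ⁅lnb y x a, lnb y x (b + 1)⁆
          = ⁅⁅lnb y x a, lnb y x b⁆, x⁆ - ⁅lnb y x (a + 1), lnb y x b⁆ := by
        intro a
        rw [hSsucc b, leibniz_lie, ← hSsucc a,
          ← lie_skew (lnb y x b) (lnb y x (a + 1)), ← sub_eq_add_neg]
      constructor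
      · intro a ha
        rw [expand a, ih0 a (by omega), ih0 (a + 1) (by omega), zero_lie, sub_zero]
      · intro a m ha hm
        by_cases haℓ : a = ℓ - 1
        · subst haℓ
          have hm1 : m = b + 1 := by omega
          subst hm1
          rw [expand _, hS0 (ℓ - 1 + 1) (by omega), zero_lie, sub_zero,
            ihf (ℓ - 1) b (by omega) (by omega), Nat.sub_self, pow_zero,
            Nat.choose_zero_right, Nat.choose_zero_right]
          norm_num
          exact (hTsucc b).symm
        · have ha' : a < ℓ - 1 := lt_of_le_of_ne ha haℓ
          rcases Nat.eq_zero_or_pos m with hm0 | hm1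
          · subst hm0
            rw [expand a, ih0 a (by omega), zero_lie, zero_sub,
              ihf (a + 1) 0 (by omega) (by omega)]
            have h1 : ℓ - 1 - (a + 1) = b := by omega
            have h2 : ℓ - 1 - a = b + 1 := by omega
            rw [h1, h2, Nat.choose_self, Nat.choose_self, ← neg_smul]
            congr 1
            push_cast
            ring
          · obtain ⟨m', rfl⟩ : ∃ m', m = m' + 1 := ⟨m - 1, by omega⟩
            rw [expand a, ihf a m' (by omega) (by omega),
              ihf (a + 1) (m' + 1) (by omega) (by omega), zsmul_lie, ← hTsucc m',
              ← sub_smul]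
            congr 1
            obtain ⟨k, hk⟩ : ∃ k, ℓ - 1 - a = k + 1 := ⟨ℓ - 2 - a, by omega⟩
            have hk1 : ℓ - 1 - (a + 1) = k := by omega
            rw [hk, hk1]
            push_cast [Nat.choose_succ_succ b k]
            ring
  have keyf := fun b => (key b).2
  -- ℓ is even
  have hleven : 2 ∣ ℓ := by
    by_contra hodd
    set a := (ℓ - 1) / 2 with hadef
    have h := keyf a a 0 (by omega) (by omega)
    rw [lie_self] at h
    have hcoef : ℓ - 1 - a = a := by omega
    rw [hcoef, Nat.choose_self, hT00] at h
    have h2 : (((-1 : ℤ) ^ a * ((1 : ℕ) : ℤ))) • t = 0 := h.symm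
    rcases Nat.even_or_odd a with he | ho
    · rw [he.neg_one_pow] at h2
      simp at h2
      exact ht h2
    · rw [ho.neg_one_pow] at h2
      simp at h2
      exact ht h2
  have hl4 : 4 ≤ ℓ := by omega
  -- T (ℓ - 1) = 0
  have hTl : lnb t x (ℓ - 1) = 0 := by
    have h := keyf (ℓ - 1) (ℓ - 1) (ℓ - 1) (le_refl _) (by omega)
    rw [lie_self, Nat.sub_self, pow_zero, Nat.choose_zero_right] at h
    have := h.symm
    simpa using this
  have hex0 : ∃ k, lnb t x k = 0 := ⟨ℓ - 1, hTl⟩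
  set n₀ := Nat.find hex0 with hn₀def
  have hTn₀ : lnb t x n₀ = 0 := Nat.find_spec hex0
  have hTne : ∀ k, k < n₀ → lnb t x k ≠ 0 := fun k hk => Nat.find_min hex0 hk
  have hn₀l : n₀ ≤ ℓ - 1 := Nat.find_min' hex0 hTl
  have hn₀pos : 0 < n₀ := by
    rcases Nat.eq_zero_or_pos n₀ with h | h
    · exact absurd (h ▸ hTn₀ : lnb t x 0 = 0) (by rw [hT00]; exact ht)
    · exact h
  -- E t = 0
  have hEt : ⁅t, y⁆ = 0 := by
    have h := keyf (ℓ - 2) 1 0 (by omega) (by omega)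
    have hE := lie_lie (lnb y x 1) (lnb y x (ℓ - 2)) y
    rw [hc0 (ℓ - 2) (by omega), hc0 1 (by omega), lie_zero, lie_zero, sub_zero] at hE
    rw [h, zsmul_lie, hT00] at hE
    have hcoef : ℓ - 1 - 1 = ℓ - 2 := by omega
    rw [hcoef, Nat.choose_self] at hE
    have heven : Even (ℓ - 2) := by
      rcases hleven with ⟨r, hr⟩
      exact ⟨r - 1, by omega⟩
    rw [heven.neg_one_pow] at hE
    simpa using hE
  -- spanning tools
  have hnonbot : ∀ d : ℕ, 2 ≤ d → ∃ z ∈ Lc d, z ≠ 0 := by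
    intro d hd
    by_contra hcon
    push_neg at hcon
    have hbot : Lc d = ⊥ := by
      rw [Submodule.eq_bot_iff]
      exact hcon
    have h1 := hL.dim_rest d hd
    rw [hbot, finrank_bot] at h1
    omega
  have hmul : ∀ d : ℕ, 2 ≤ d → ∀ w : L, w ∈ Lc d → w ≠ 0 →
      ∀ z ∈ Lc d, ∃ cc : F, z = cc • w := by
    intro d hd w hw hwne z hz
    have h1 := hL.dim_rest d hd
    have hwne' : (⟨w, hw⟩ : Lc d) ≠ 0 := by
      simp only [ne_eq, Submodule.mk_eq_zero]
      exact hwne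
    obtain ⟨cc, hcc⟩ := (finrank_eq_one_iff_of_nonzero' (⟨w, hw⟩ : Lc d) hwne').mp h1 ⟨z, hz⟩
    refine ⟨cc, ?_⟩
    have := congrArg Subtype.val hcc
    simpa using this.symm
  -- x, y span Lc 1
  have hxy_li : LinearIndependent F ![(⟨x, hxm⟩ : Lc 1), ⟨y, hym⟩] := by
    rw [linearIndependent_fin2]
    constructor
    · simp only [Matrix.cons_val_one, Matrix.head_cons, ne_eq, Submodule.mk_eq_zero]
      simpa using hyne
    · intro a
      simp only [Matrix.cons_val_one, Matrix.head_cons, Matrix.cons_val_zero]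
      intro hcon
      apply hxnm a
      have := congrArg Subtype.val hcon
      simpa using this.symm
  have hspan1 : ∀ z ∈ Lc 1, ∃ a b : F, z = a • x + b • y := by
    intro z hz
    haveI : FiniteDimensional F (Lc 1) := FiniteDimensional.of_finrank_pos (by
      rw [hL.dim_one]; norm_num)
    have hrange : Set.range ![(⟨x, hxm⟩ : Lc 1), ⟨y, hym⟩] = {⟨x, hxm⟩, ⟨y, hym⟩} := by
      simp [Matrix.range_cons, Matrix.range_empty, Set.pair_comm]
    have htop : Submodule.span F ({⟨x, hxm⟩, ⟨y, hym⟩} : Set (Lc 1)) = ⊤ := by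
      apply Submodule.eq_top_of_finrank_eq
      rw [← hrange, finrank_span_eq_card hxy_li, hL.dim_one]
      simp
    have hmem : (⟨z, hz⟩ : Lc 1) ∈ Submodule.span F ({⟨x, hxm⟩, ⟨y, hym⟩} : Set (Lc 1)) := by
      rw [htop]; trivial
    obtain ⟨a, b, hab⟩ := Submodule.mem_span_pair.mp hmem
    refine ⟨a, b, ?_⟩
    have := congrArg Subtype.val hab
    simpa using this.symm
  have hspan : ∀ d : ℕ, 2 ≤ d → ∀ w : L, w ∈ Lc d → w ≠ 0 →
      ∀ z ∈ Lc (d + 1), ∃ a b : F, z = a • ⁅w, x⁆ + b • ⁅w, y⁆ := by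
    intro d hd w hw hwne z hz
    rw [hL.gen d (by omega)] at hz
    have hsub : {z | ∃ u ∈ Lc d, ∃ v ∈ Lc 1, z = ⁅u, v⁆} ⊆
        (Submodule.span F {⁅w, x⁆, ⁅w, y⁆} : Submodule F L) := by
      rintro _ ⟨uu, hu, v, hv, rfl⟩
      obtain ⟨cu, rfl⟩ := hmul d hd w hw hwne uu hu
      obtain ⟨a, b, rfl⟩ := hspan1 v hv
      have hexp : ⁅cu • w, a • x + b • y⁆ = (cu * a) • ⁅w, x⁆ + (cu * b) • ⁅w, y⁆ := by
        rw [lie_add, smul_lie, smul_lie, lie_smul, lie_smul, smul_smul, smul_smul]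
      rw [hexp]
      exact Submodule.add_mem _
        (Submodule.smul_mem _ _ (Submodule.subset_span (by simp)))
        (Submodule.smul_mem _ _ (Submodule.subset_span (by simp)))
    have hz' := Submodule.span_le.mpr hsub hz
    obtain ⟨a, b, hab⟩ := Submodule.mem_span_pair.mp hz'
    exact ⟨a, b, hab.symm⟩
  have hTmem : ∀ k : ℕ, lnb t x k ∈ Lc (ℓ + 1 + k) := by
    intro k
    induction k with
    | zero =>
      have h1 := hL.bracket_mem (ℓ - 1 + 1) 1 _ (hSmem (ℓ - 1)) y hym
      rw [show ℓ - 1 + 1 + 1 = ℓ + 1 by omega] at h1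
      exact h1
    | succ k ih =>
      have h := hL.bracket_mem (ℓ + 1 + k) 1 _ ih x hxm
      rwa [show ℓ + 1 + k + 1 = ℓ + 1 + (k + 1) from rfl] at h
  have hDt : lnb t x 1 ≠ 0 := by
    obtain ⟨z, hz, hzne⟩ := hnonbot (ℓ + 2) (by omega)
    have hmem0 : t ∈ Lc (ℓ + 1) := by exact hTmem 0
    have hz' : z ∈ Lc ((ℓ + 1) + 1) := by rwa [show (ℓ + 1) + 1 = ℓ + 2 by omega]
    obtain ⟨a, b, hab⟩ := hspan (ℓ + 1) (by omega) t hmem0 ht z hz'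
    rw [hEt, smul_zero, add_zero] at hab
    intro hD0
    apply hzne
    rw [hab, show ⁅t, x⁆ = lnb t x 1 from rfl, hD0, smul_zero]
  have hn₀2 : 2 ≤ n₀ := by
    by_contra hcon
    have h1 : n₀ = 1 := by omega
    exact hDt (h1 ▸ hTn₀)
  have hu : ⁅lnb t x (n₀ - 1), y⁆ ≠ 0 := by
    obtain ⟨z, hz, hzne⟩ := hnonbot (ℓ + n₀ + 1) (by omega)
    have hmem : lnb t x (n₀ - 1) ∈ Lc (ℓ + n₀) := by
      have := hTmem (n₀ - 1)
      rwa [show ℓ + 1 + (n₀ - 1) = ℓ + n₀ by omega] at this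
    have hz' : z ∈ Lc ((ℓ + n₀) + 1) := hz
    obtain ⟨a, b, hab⟩ := hspan (ℓ + n₀) (by omega) _ hmem (hTne (n₀ - 1) (by omega)) z hz'
    have hDD : ⁅lnb t x (n₀ - 1), x⁆ = 0 := by
      rw [← hTsucc (n₀ - 1), show n₀ - 1 + 1 = n₀ by omega]
      exact hTn₀
    intro hu0
    apply hzne
    rw [hab, hDD, hu0, smul_zero, smul_zero, add_zero]

  -- (c)-facts and (d)-facts over F
  have convF : ∀ (z : ℤ) (v : L), z • v = ((z : F)) • v := fun z v =>
    (Int.cast_smul_eq_zsmul F z v).symm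
  have hnegpow : ∀ a b : ℕ, a + b = ℓ → ((-1 : F)) ^ a * (-1) ^ b = 1 := by
    intro a b hab
    rw [← pow_add, hab]
    exact (by rcases hleven with ⟨r, hr⟩; exact ⟨r, by omega⟩ : Even ℓ).neg_one_pow
  have hcF : ∀ j, 1 ≤ j → j < n₀ → (((ℓ - 1).choose j : ℕ) : F) = (-1) ^ j := by
    intro j h1 hj
    have hTj := hTne j hj
    have e1 := keyf j (ℓ - 1) j (le_refl _) (by omega)
    have e2 := keyf (ℓ - 1) j j (by omega) (by omega)
    rw [Nat.sub_self, pow_zero, Nat.choose_zero_right, Nat.cast_one, one_mul, one_smul] at e1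
    have e3 : lnb t x j
        + (((-1 : ℤ) ^ (ℓ - 1 - j)) * (((ℓ - 1).choose (ℓ - 1 - j) : ℕ) : ℤ)) • lnb t x j
        = 0 := by
      rw [← e2, ← e1, ← lie_skew (lnb y x (ℓ - 1)) (lnb y x j)]
      exact neg_add_cancel _
    have e4 : ((1 + ((-1 : ℤ) ^ (ℓ - 1 - j)) * (((ℓ - 1).choose (ℓ - 1 - j) : ℕ) : ℤ)))
        • lnb t x j = 0 := by
      rw [add_smul, one_smul]; exact e3
    rw [convF] at e4
    have e5 := (smul_eq_zero.mp e4).resolve_right hTj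
    rw [Nat.choose_symm (by omega : j ≤ ℓ - 1)] at e5
    push_cast at e5
    have h8 := hnegpow (ℓ - 1 - j) (j + 1) (by omega)
    have h9 : ((-1 : F)) ^ j * (-1) ^ j = 1 := by
      rw [← pow_add]; exact Even.neg_one_pow ⟨j, rfl⟩
    have h10 : ((-1 : F)) ^ (ℓ - 1 - j) * (-1) ^ (ℓ - 1 - j) = 1 := by
      rw [← pow_add]; exact Even.neg_one_pow ⟨ℓ - 1 - j, rfl⟩
    linear_combination ((-1 : F) ^ (ℓ - 1 - j)) * e5 + ((-1 : F) ^ j) * h8 +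
      (-(((ℓ - 1).choose j : ℕ) : F)) * h10 + ((-1 : F) ^ (ℓ - 1 - j)) * h9
  have hdF : ∀ k, 1 ≤ k → k ≤ ℓ - 1 → k ≠ ℓ - n₀ →
      (((n₀ - 1 + k).choose k : ℕ) : F) = 0 := by
    intro k hk1 hk2 hk3
    have hb : (ℓ - 1 - k) + (n₀ - 1 + k) = (ℓ - 1) + (n₀ - 1) := by omega
    have e1 := keyf (n₀ - 1 + k) (ℓ - 1 - k) (n₀ - 1) (by omega) hb
    have hE := lie_lie (lnb y x (ℓ - 1 - k)) (lnb y x (n₀ - 1 + k)) y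
    rw [hc0 (n₀ - 1 + k) (by omega), hc0 (ℓ - 1 - k) (by omega), lie_zero, lie_zero,
      sub_zero] at hE
    rw [e1, zsmul_lie, convF] at hE
    have e5 := (smul_eq_zero.mp hE).resolve_right hu
    have h5 : ℓ - 1 - (ℓ - 1 - k) = k := by omega
    rw [h5] at e5
    push_cast at e5
    have h6 : ((-1 : F)) ^ k ≠ 0 := pow_ne_zero _ (by norm_num)
    exact (mul_eq_zero.mp e5).resolve_left h6
  -- characteristic
  have hlF : ((ℓ : ℕ) : F) = 0 := by
    have h := hcF 1 (le_refl _) (by omega)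
    rw [Nat.choose_one_right, pow_one] at h
    have h2 : ((ℓ : ℕ) : F) = ((ℓ - 1 : ℕ) : F) + 1 := by
      rw [show ℓ = (ℓ - 1) + 1 by omega]
      push_cast
      ring
    rw [h2, h]
    ring
  set p := ringChar F with hpdef
  haveI hPinst : CharP F p := ringChar.charP F
  have hpdvd : p ∣ ℓ := (CharP.cast_eq_zero_iff F p ℓ).mp hlF
  have hpne : p ≠ 0 := by
    rintro h0
    rw [h0, zero_dvd_iff] at hpdvd
    omega
  have hpprime : p.Prime := (CharP.char_is_prime_or_zero F p).resolve_right hpne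
  haveI : Fact p.Prime := ⟨hpprime⟩
  have φinj : Function.Injective (ZMod.castHom (dvd_refl p) F) :=
    (ZMod.castHom (dvd_refl p) F).injective
  have hcZ : ∀ j, 1 ≤ j → j < n₀ → (((ℓ - 1).choose j : ℕ) : ZMod p) = (-1) ^ j := by
    intro j h1 h2
    apply φinj
    rw [map_natCast, map_pow, map_neg, map_one]
    exact hcF j h1 h2
  have hdZ : ∀ k, 1 ≤ k → k ≤ ℓ - 1 → k ≠ ℓ - n₀ →
      (((n₀ - 1 + k).choose k : ℕ) : ZMod p) = 0 := by
    intro k h1 h2 h3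
    apply φinj
    rw [map_natCast, map_zero]
    exact hdF k h1 h2 h3
  obtain ⟨m, hm⟩ := NTmain p hpprime ℓ n₀ hl4 hleven hn₀2 hn₀l hcZ hdZ
  exact ⟨p, hpprime, hPinst, m, hm⟩
end

section
/- (Theorem 3.2, second part) Let L be a non-metabelian graded Lie algebra of maximal class over a field F of odd prime characteristic p, with setup elements x, y, first constituent length ℓ = 2q (q a power of p), and second constituent length ℓ_2 as in the recursive definition. Then ℓ_2 = q. -/
section AuxLemmas

variable {L : Type*} [LieRing L]

private lemma lnb_zero' (a b : L) : lnb a b 0 = a := rfl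

private lemma lnb_succ (a b : L) (n : ℕ) : lnb a b (n + 1) = ⁅lnb a b n, b⁆ := rfl

private lemma lnb_zero_left (b : L) (n : ℕ) : lnb (0 : L) b n = 0 := by
  induction n with
  | zero => rfl
  | succ n ih => rw [lnb_succ, ih, zero_lie]

private lemma lnb_neg (a b : L) (n : ℕ) : lnb (-a) b n = -lnb a b n := by
  induction n with
  | zero => rfl
  | succ n ih => rw [lnb_succ, ih, neg_lie, lnb_succ]

private lemma lnb_add_exp (a b : L) (m n : ℕ) : lnb a b (m + n) = lnb (lnb a b m) b n := by
  induction n with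
  | zero => rfl
  | succ n ih => rw [← Nat.add_assoc, lnb_succ, ih, lnb_succ]

private lemma lie_lie_right (u z w : L) : ⁅u, ⁅z, w⁆⁆ = ⁅⁅u, z⁆, w⁆ - ⁅⁅u, w⁆, z⁆ := by
  rw [leibniz_lie, sub_eq_add_neg, lie_skew]

end AuxLemmas

/-- The key char-`p` expansion: if `q` is a power of `p = char F`, then for all `z u`,
`[u, [z x^q]] = [[u,z] x^q] - [[u x^q], z]`. -/
private lemma lie_lnb_pow_char {F : Type*} [Field F] {L : Type*} [LieRing L] [LieAlgebra F L]
    [Nontrivial L] (p : ℕ) (hp : p.Prime) [CharP F p] (x : L) (q : ℕ)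
    (hq : ∃ m : ℕ, q = p ^ m) (z u : L) :
    ⁅u, lnb z x q⁆ = lnb ⁅u, z⁆ x q - ⁅lnb u x q, z⁆ := by
  haveI := Fact.mk hp
  obtain ⟨m, rfl⟩ := hq
  set A : Module.End F L := -(LieAlgebra.ad F L x) with hA
  have hAapp : ∀ v : L, A v = ⁅v, x⁆ := by
    intro v
    rw [hA, LinearMap.neg_apply, LieAlgebra.ad_apply, lie_skew]
  have hApow : ∀ (n : ℕ) (v : L), (A ^ n) v = lnb v x n := by
    intro n
    induction n with
    | zero => intro v; rw [pow_zero, Module.End.one_apply, lnb_zero']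
    | succ n ih =>
      intro v
      rw [pow_succ, Module.End.mul_apply, hAapp v, ih ⁅v, x⁆,
        show (⁅v, x⁆ : L) = lnb v x 1 from rfl, ← lnb_add_exp, Nat.add_comm 1 n]
  have hTapp : ∀ (w v : L), (-(LieAlgebra.ad F L w)) v = ⁅v, w⁆ := by
    intro w v
    rw [LinearMap.neg_apply, LieAlgebra.ad_apply, lie_skew]
  have hTlie : ∀ w : L, -(LieAlgebra.ad F L ⁅w, x⁆) =
      A * (-(LieAlgebra.ad F L w)) - (-(LieAlgebra.ad F L w)) * A := by
    intro w
    letI := LieRing.ofAssociativeRing (A := Module.End F L)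
    have h := (LieAlgebra.ad F L).map_lie (x := w) (y := x)
    rw [Ring.lie_def] at h
    rw [h, hA]
    noncomm_ring
  set Δ : Module.End F (Module.End F L) :=
    LinearMap.mulLeft F A - LinearMap.mulRight F A with hΔ
  have hΔapp : ∀ S : Module.End F L, Δ S = A * S - S * A := by
    intro S
    rw [hΔ, LinearMap.sub_apply, LinearMap.mulLeft_apply, LinearMap.mulRight_apply]
  have hDelta : ∀ n : ℕ, -(LieAlgebra.ad F L (lnb z x n)) = (Δ ^ n) (-(LieAlgebra.ad F L z)) := by
    intro n
    induction n with
    | zero => rw [pow_zero, Module.End.one_apply, lnb_zero']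
    | succ n ih =>
      rw [lnb_succ, hTlie (lnb z x n), ih, pow_succ', Module.End.mul_apply, hΔapp]
  haveI : CharP (Module.End F (Module.End F L)) p := charP_of_injective_algebraMap' F p
  have hΔpow : Δ ^ (p ^ m) =
      LinearMap.mulLeft F (A ^ (p ^ m)) - LinearMap.mulRight F (A ^ (p ^ m)) := by
    rw [hΔ, sub_pow_char_pow_of_commute _ _ (LinearMap.commute_mulLeft_right A A),
      LinearMap.pow_mulLeft, LinearMap.pow_mulRight]
  have hmain := congrArg (fun S : Module.End F L => S u) (hDelta (p ^ m))
  rw [hTapp (lnb z x (p ^ m)) u, hΔpow, LinearMap.sub_apply, LinearMap.mulLeft_apply,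
    LinearMap.mulRight_apply, LinearMap.sub_apply, Module.End.mul_apply, Module.End.mul_apply,
    hTapp z u, hApow, hApow, hTapp z] at hmain
  exact hmain

/-- Theorem 3.2, second part: in odd characteristic `p`, if the first constituent
length is `ℓ = 2q` with `q` a power of `p`, then the second constituent has length `q`. -/
theorem second_constituent_length {F : Type*} [Field F] {L : Type*} [LieRing L] [LieAlgebra F L]
    (p : ℕ) (hp : p.Prime) (hp2 : p ≠ 2) (hchar : CharP F p)
    (Lc : ℕ → Submodule F L) (hL : IsMaxClassGrading F L Lc)
    (x y : L) (ℓ q : ℕ) (hq : ∃ m : ℕ, q = p ^ m) (hℓq : ℓ = 2 * q)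
    (hsetup : MaxClassSetup Lc x y ℓ)
    (ℓ₂ : ℕ) (hℓ₂pos : 0 < ℓ₂)
    (h1 : ∀ i : ℕ, i < ℓ₂ - 1 → ⁅lnb ⁅lnb y x (ℓ - 1), y⁆ x i, y⁆ = 0)
    (h2 : ⁅lnb ⁅lnb y x (ℓ - 1), y⁆ x (ℓ₂ - 1), y⁆ ≠ 0) :
    ℓ₂ = q := by
  haveI := hchar
  haveI : Nontrivial L := ⟨⟨y, 0, hsetup.y_ne⟩⟩
  subst hℓq
  obtain ⟨m, hm⟩ := hq
  -- exclude m = 0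
  have hp3 : 3 ≤ p := by
    have := hp.two_le
    omega
  have hq3 : 3 ≤ q := by
    rcases Nat.eq_zero_or_pos m with h0 | hpos
    · exfalso
      subst h0
      rw [pow_zero] at hm
      subst hm
      apply hsetup.first_const_ne
      have hb : ⁅y, x⁆ ∈ Lc 2 := hL.bracket_mem 1 1 y hsetup.y_mem x hsetup.x_mem
      have : lnb y x (2 * 1 - 1) = ⁅y, x⁆ := rfl
      rw [this]
      exact hsetup.y_central _ hb
    · have h1 : p ≤ p ^ m := Nat.le_self_pow (by omega) p
      omega
  -- tail of the x-chain vanishes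
  have hxc : ∀ i : ℕ, 2 * q ≤ i → lnb y x i = 0 := by
    intro i hi
    obtain ⟨t, rfl⟩ : ∃ t, i = 2 * q + t := ⟨i - 2 * q, by omega⟩
    rw [lnb_add_exp, hsetup.normalized, lnb_zero_left]
  -- the char-p expansion lemma, instantiated
  have hop : ∀ z u : L, ⁅u, lnb z x q⁆ = lnb ⁅u, z⁆ x q - ⁅lnb u x q, z⁆ :=
    lie_lnb_pow_char (F := F) p hp x q ⟨m, hm⟩
  -- Main inductive computation
  have hMain : ∀ k : ℕ, k ≤ q - 1 →
      (⁅lnb y x (q - 1), lnb y x (q + k)⁆ = -(lnb ⁅lnb y x (2 * q - 1), y⁆ x k) ∧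
       ∀ s : ℕ, 1 ≤ s → k + s ≤ q - 1 → ⁅lnb y x (q - 1 + s), lnb y x (q + k)⁆ = 0) := by
    intro k
    induction k with
    | zero =>
      intro _
      constructor
      · rw [Nat.add_zero, hop y (lnb y x (q - 1)),
          hsetup.first_const (q - 1) (by omega), lnb_zero_left, zero_sub,
          ← lnb_add_exp, show q - 1 + q = 2 * q - 1 by omega, lnb_zero']
      · intro s hs1 hs2
        rw [Nat.add_zero, hop y (lnb y x (q - 1 + s)),
          hsetup.first_const (q - 1 + s) (by omega), lnb_zero_left, zero_sub,
          ← lnb_add_exp, hxc (q - 1 + s + q) (by omega), zero_lie, neg_zero]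
    | succ k ih =>
      intro hk1
      obtain ⟨ih1, ih2⟩ := ih (by omega)
      have hrw : q + (k + 1) = (q + k) + 1 := rfl
      constructor
      · rw [hrw, lnb_succ, lie_lie_right, ih1, ← lnb_succ y x (q - 1)]
        rw [show q - 1 + 1 = q - 1 + 1 from rfl] at *
        rw [ih2 1 le_rfl (by omega), neg_lie, sub_zero, ← lnb_succ]
      · intro s hs1 hs2
        rw [hrw, lnb_succ, lie_lie_right, ih2 s hs1 (by omega), zero_lie,
          ← lnb_succ y x (q - 1 + s), Nat.add_assoc (q - 1) s 1,
          ih2 (s + 1) (by omega) (by omega), sub_zero]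
  -- Identity A : [w_k, y] = 0 for k ≤ q - 2
  have hIdA : ∀ k : ℕ, k ≤ q - 2 → ⁅lnb ⁅lnb y x (2 * q - 1), y⁆ x k, y⁆ = 0 := by
    intro k hk
    have h := (hMain k (by omega)).1
    have hwk : lnb ⁅lnb y x (2 * q - 1), y⁆ x k
        = -⁅lnb y x (q - 1), lnb y x (q + k)⁆ := by rw [h, neg_neg]
    rw [hwk, neg_lie]
    have h0 : ⁅lnb y x (q + k), y⁆ = 0 := hsetup.first_const _ (by omega)
    have hjac := lie_lie_right (lnb y x (q - 1)) (lnb y x (q + k)) y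
    rw [h0, lie_zero] at hjac
    have hO1 : ⁅⁅lnb y x (q - 1), lnb y x (q + k)⁆, y⁆
        = ⁅⁅lnb y x (q - 1), y⁆, lnb y x (q + k)⁆ := sub_eq_zero.mp hjac.symm
    rw [hO1, hsetup.first_const (q - 1) (by omega), zero_lie, neg_zero]
  -- Identity B : w_q = 0
  have hIdB : lnb ⁅lnb y x (2 * q - 1), y⁆ x q = 0 := by
    have e0 : lnb (lnb y x q) x q = (0 : L) := by
      rw [← lnb_add_exp]; exact hxc (q + q) (by omega)
    have hkey := hop (lnb y x q) (lnb y x (q - 1))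
    rw [e0, lie_zero] at hkey
    have p1 : ⁅lnb y x (q - 1), lnb y x q⁆ = -(⁅lnb y x (2 * q - 1), y⁆) := by
      have := (hMain 0 (by omega)).1
      rw [Nat.add_zero] at this
      rw [this, lnb_zero']
    have p3 : lnb (lnb y x (q - 1)) x q = lnb y x (2 * q - 1) := by
      rw [← lnb_add_exp, show q - 1 + q = 2 * q - 1 by omega]
    have p4 : ⁅lnb y x (2 * q - 1), lnb y x q⁆
        = lnb ⁅lnb y x (2 * q - 1), y⁆ x q := by
      rw [hop y (lnb y x (2 * q - 1)), ← lnb_add_exp,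
        hxc (2 * q - 1 + q) (by omega), zero_lie, sub_zero]
    rw [p1, lnb_neg, p3, p4] at hkey
    -- hkey : 0 = -(S) - S
    have hsum : lnb ⁅lnb y x (2 * q - 1), y⁆ x q + lnb ⁅lnb y x (2 * q - 1), y⁆ x q = 0 := by
      have h := hkey.symm
      rw [sub_eq_add_neg, ← neg_add] at h
      exact neg_eq_zero.mp h
    have h2F : ((2 : ℕ) : F) ≠ 0 := by
      rw [Ne, CharP.cast_eq_zero_iff F p 2]
      intro hdvd
      exact hp2 ((Nat.prime_dvd_prime_iff_eq hp Nat.prime_two).mp hdvd)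
    have h2s : ((2 : ℕ) : F) • lnb ⁅lnb y x (2 * q - 1), y⁆ x q = 0 := by
      rw [Nat.cast_ofNat, two_smul]
      exact hsum
    exact (smul_eq_zero.mp h2s).resolve_left h2F
  -- Now the case analysis
  rcases lt_trichotomy ℓ₂ q with hlt | heq | hgt
  · exfalso
    exact h2 (hIdA (ℓ₂ - 1) (by omega))
  · exact heq
  · exfalso
    -- spanning argument
    haveI : FiniteDimensional F (Lc 1) :=
      Module.finite_of_finrank_pos (by rw [hL.dim_one]; norm_num)
    have hxy_ind : LinearIndependent F ![x, y] := by
      rw [linearIndependent_fin2]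
      constructor
      · simpa using hsetup.y_ne
      · intro a ha
        exact hsetup.x_not_mul a (by simpa using ha.symm)
    have hmem : ∀ u ∈ Lc 1, ∃ a b : F, u = a • x + b • y := by
      intro u hu
      have hcomp : (Lc 1).subtype ∘ ![(⟨x, hsetup.x_mem⟩ : Lc 1), ⟨y, hsetup.y_mem⟩] = ![x, y] := by
        funext i; fin_cases i <;> rfl
      have hvind : LinearIndependent F ![(⟨x, hsetup.x_mem⟩ : Lc 1), ⟨y, hsetup.y_mem⟩] :=
        LinearIndependent.of_comp (Lc 1).subtype (by rw [hcomp]; exact hxy_ind)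
      have htop : Submodule.span F
          (Set.range ![(⟨x, hsetup.x_mem⟩ : Lc 1), ⟨y, hsetup.y_mem⟩]) = ⊤ := by
        apply Submodule.eq_top_of_finrank_eq
        rw [finrank_span_eq_card hvind]
        simp [hL.dim_one]
      have hmem' : (⟨u, hu⟩ : Lc 1) ∈ Submodule.span F
          (Set.range ![(⟨x, hsetup.x_mem⟩ : Lc 1), ⟨y, hsetup.y_mem⟩]) := by
        rw [htop]; exact Submodule.mem_top
      obtain ⟨c, hc⟩ := (Submodule.mem_span_range_iff_exists_fun F).mp hmem'
      refine ⟨c 0, c 1, ?_⟩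
      have := congrArg ((Lc 1).subtype) hc
      simpa [Fin.sum_univ_two] using this.symm
    have hstep1 : ∀ d : ℕ, 1 ≤ d → ∀ g : L, Lc d ≤ Submodule.span F {g} → ⁅g, y⁆ = 0 →
        Lc (d + 1) ≤ Submodule.span F {⁅g, x⁆} := by
      intro d hd g hg hgy
      rw [hL.gen d hd, Submodule.span_le]
      rintro z ⟨u, hu, w', hw', rfl⟩
      obtain ⟨c, hc⟩ := Submodule.mem_span_singleton.mp (hg hu)
      obtain ⟨a, b, hab⟩ := hmem w' hw'
      subst hc; subst hab
      have hz : ⁅c • g, a • x + b • y⁆ = (a * c) • ⁅g, x⁆ := by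
        simp only [lie_add, lie_smul, smul_lie, hgy, smul_zero, add_zero, smul_smul]
      rw [SetLike.mem_coe, hz]
      exact Submodule.smul_mem _ _ (Submodule.mem_span_singleton_self _)
    have hstep2 : ∀ d : ℕ, 1 ≤ d → ∀ g : L, Lc d ≤ Submodule.span F {g} → ⁅g, x⁆ = 0 →
        Lc (d + 1) ≤ Submodule.span F {⁅g, y⁆} := by
      intro d hd g hg hgx
      rw [hL.gen d hd, Submodule.span_le]
      rintro z ⟨u, hu, w', hw', rfl⟩
      obtain ⟨c, hc⟩ := Submodule.mem_span_singleton.mp (hg hu)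
      obtain ⟨a, b, hab⟩ := hmem w' hw'
      subst hc; subst hab
      have hz : ⁅c • g, a • x + b • y⁆ = (b * c) • ⁅g, y⁆ := by
        simp only [lie_add, lie_smul, smul_lie, hgx, smul_zero, zero_add, smul_smul]
      rw [SetLike.mem_coe, hz]
      exact Submodule.smul_mem _ _ (Submodule.mem_span_singleton_self _)
    have hstep0 : ∀ d : ℕ, 1 ≤ d → ∀ g : L, Lc d ≤ Submodule.span F {g} → ⁅g, x⁆ = 0 →
        ⁅g, y⁆ = 0 → Lc (d + 1) ≤ ⊥ := by
      intro d hd g hg hgx hgy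
      rw [hL.gen d hd, Submodule.span_le]
      rintro z ⟨u, hu, w', hw', rfl⟩
      obtain ⟨c, hc⟩ := Submodule.mem_span_singleton.mp (hg hu)
      obtain ⟨a, b, hab⟩ := hmem w' hw'
      subst hc; subst hab
      have hz : ⁅c • g, a • x + b • y⁆ = 0 := by
        simp only [lie_add, lie_smul, smul_lie, hgx, hgy, smul_zero, add_zero]
      rw [SetLike.mem_coe, hz]
      exact Submodule.zero_mem ⊥
    -- base : Lc 2 ≤ span {[y,x]}
    have hbase : Lc 2 ≤ Submodule.span F {⁅y, x⁆} := by
      rw [show (2 : ℕ) = 1 + 1 from rfl, hL.gen 1 le_rfl, Submodule.span_le]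
      rintro z ⟨u, hu, w', hw', rfl⟩
      obtain ⟨a, b, hab⟩ := hmem u hu
      obtain ⟨c, d, hcd⟩ := hmem w' hw'
      subst hab; subst hcd
      have hxy : ⁅x, y⁆ = -⁅y, x⁆ := (lie_skew x y).symm
      have hz : ⁅a • x + b • y, c • x + d • y⁆
          = -((a * d) • ⁅y, x⁆) + (b * c) • ⁅y, x⁆ := by
        simp only [add_lie, lie_add, lie_smul, smul_lie, lie_self, smul_zero, add_zero,
          zero_add, hxy, smul_neg, smul_smul]
        rw [mul_comm c b, mul_comm d a, add_comm]
      rw [SetLike.mem_coe, hz]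
      exact Submodule.add_mem _
        (Submodule.neg_mem _ (Submodule.smul_mem _ _ (Submodule.mem_span_singleton_self _)))
        (Submodule.smul_mem _ _ (Submodule.mem_span_singleton_self _))
    -- chain up to 2q
    have hchain1 : ∀ j : ℕ, j + 2 ≤ 2 * q → Lc (j + 2) ≤ Submodule.span F {lnb y x (j + 1)} := by
      intro j
      induction j with
      | zero =>
        intro _
        have : lnb y x 1 = ⁅y, x⁆ := rfl
        rw [this]
        exact hbase
      | succ j ih =>
        intro hj
        have h := hstep1 (j + 2) (by omega) (lnb y x (j + 1)) (ih (by omega))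
          (hsetup.first_const (j + 1) (by omega))
        rw [← lnb_succ] at h
        exact h
    have h2qspan : Lc (2 * q) ≤ Submodule.span F {lnb y x (2 * q - 1)} := by
      have h := hchain1 (2 * q - 2) (by omega)
      rw [show 2 * q - 2 + 2 = 2 * q by omega, show 2 * q - 2 + 1 = 2 * q - 1 by omega] at h
      exact h
    have hw0span : Lc (2 * q + 1) ≤ Submodule.span F {⁅lnb y x (2 * q - 1), y⁆} := by
      apply hstep2 (2 * q) (by omega) (lnb y x (2 * q - 1)) h2qspan
      rw [← lnb_succ, show 2 * q - 1 + 1 = 2 * q by omega]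
      exact hsetup.normalized
    have hwkspan : ∀ k : ℕ, k ≤ q - 1 →
        Lc (2 * q + 1 + k) ≤ Submodule.span F {lnb ⁅lnb y x (2 * q - 1), y⁆ x k} := by
      intro k
      induction k with
      | zero =>
        intro _
        rw [lnb_zero']
        exact hw0span
      | succ k ih =>
        intro hk
        have h := hstep1 (2 * q + 1 + k) (by omega) (lnb ⁅lnb y x (2 * q - 1), y⁆ x k)
          (ih (by omega)) (hIdA k (by omega))
        rw [← lnb_succ] at h
        exact h
    -- contradiction in degree 3q+1
    have hfin := hwkspan (q - 1) (le_rfl)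
    have hy0 : ⁅lnb ⁅lnb y x (2 * q - 1), y⁆ x (q - 1), y⁆ = 0 := h1 (q - 1) (by omega)
    have hx0 : ⁅lnb ⁅lnb y x (2 * q - 1), y⁆ x (q - 1), x⁆ = 0 := by
      rw [← lnb_succ, show q - 1 + 1 = q by omega]
      exact hIdB
    have hbot : Lc (2 * q + 1 + (q - 1) + 1) ≤ ⊥ :=
      hstep0 (2 * q + 1 + (q - 1)) (by omega) _ hfin hx0 hy0
    have hdim := hL.dim_rest (2 * q + 1 + (q - 1) + 1) (by omega)
    rw [le_bot_iff.mp hbot] at hdim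
    rw [finrank_bot] at hdim
    exact absurd hdim (by norm_num)
end
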